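/- In the polynomial ring K[a,b,c,d,e,f,g] over a field K, let I_Q = (bc − ae, cd − ag, cf − ag, de − bg, ef − bg) and J = (ae − bc, ag − cf, bg − ef, d − f). Then I_Q = J ∩ (a, b, c, e) ∩ (c, e, g). -/

import Mathlib

open MvPolynomial

-- Variables of `K[a,b,c,d,e,f,g]`, indexed by `Fin 7`:
-- `a = X 0`, `b = X 1`, `c = X 2`, `d = X 3`, `e = X 4`, `f = X 5`, `g = X 6`.

section Aux

variable {K : Type*} [Field K]

lemma sub_aeval_mem (s : Set (Fin 7)) [DecidablePred (· ∈ s)] (p : MvPolynomial (Fin 7) K) :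
    p - aeval (fun i => if i ∈ s then (0 : MvPolynomial (Fin 7) K) else X i) p ∈
      Ideal.span (X '' s) := by
  induction p using MvPolynomial.induction_on with
  | C a => simp
  | add p q hp hq =>
      have := Ideal.add_mem _ hp hq
      rw [map_add]
      convert this using 1
      ring
  | mul_X p i hp =>
      rw [map_mul, aeval_X]
      by_cases hi : i ∈ s
      · rw [if_pos hi]
        have hX : (X i : MvPolynomial (Fin 7) K) ∈ Ideal.span (X '' s) :=
          Ideal.subset_span ⟨i, hi, rfl⟩
        have := Ideal.mul_mem_left _ p hX
        convert this using 1
        ring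
      · rw [if_neg hi]
        have := Ideal.mul_mem_right (X i) _ hp
        convert this using 1
        ring

lemma mem_span_X_iff (s : Set (Fin 7)) [DecidablePred (· ∈ s)] (p : MvPolynomial (Fin 7) K) :
    p ∈ Ideal.span (X '' s) ↔
      aeval (fun i => if i ∈ s then (0 : MvPolynomial (Fin 7) K) else X i) p = 0 := by
  set f : Fin 7 → MvPolynomial (Fin 7) K := fun i => if i ∈ s then 0 else X i
  constructor
  · intro hp
    have hker : Ideal.span (X '' s) ≤ RingHom.ker (aeval f : MvPolynomial (Fin 7) K →ₐ[K] _) := by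
      rw [Ideal.span_le]
      rintro _ ⟨i, hi, rfl⟩
      simp [RingHom.mem_ker, f, hi]
    exact hker hp
  · intro h
    have := sub_aeval_mem s p
    rwa [show (aeval fun i => if i ∈ s then (0 : MvPolynomial (Fin 7) K) else X i) p
        = aeval f p from rfl, h, sub_zero] at this

lemma pair_le {m : Fin 7 →₀ ℕ} {i j : Fin 7} (hij : i ≠ j) (hi : m i ≠ 0) (hj : m j ≠ 0) :
    Finsupp.single i 1 + Finsupp.single j 1 ≤ m := by
  rw [Finsupp.le_def]
  intro k
  rw [Finsupp.add_apply, Finsupp.single_apply, Finsupp.single_apply]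
  by_cases h1 : i = k
  · subst h1
    rw [if_pos rfl, if_neg (fun h => hij h.symm)]
    omega
  · by_cases h2 : j = k
    · subst h2
      rw [if_neg h1, if_pos rfl]
      omega
    · rw [if_neg h1, if_neg h2]
      simp

end Aux

/-- The join-meet ideal `I_Q = (bc − ae, cd − ag, cf − ag, de − bg, ef − bg)` of the
lattice `Q`. -/
noncomputable def IQ (K : Type*) [Field K] : Ideal (MvPolynomial (Fin 7) K) :=
  Ideal.span {X 1 * X 2 - X 0 * X 4, X 2 * X 3 - X 0 * X 6, X 2 * X 5 - X 0 * X 6,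
    X 3 * X 4 - X 1 * X 6, X 4 * X 5 - X 1 * X 6}

/-- The ideal `J = (ae − bc, ag − cf, bg − ef, d − f)`. -/
noncomputable def JQ (K : Type*) [Field K] : Ideal (MvPolynomial (Fin 7) K) :=
  Ideal.span {X 0 * X 4 - X 1 * X 2, X 0 * X 6 - X 2 * X 5, X 1 * X 6 - X 4 * X 5,
    X 3 - X 5}

/-- **Example.** `I_Q = J ∩ (a, b, c, e) ∩ (c, e, g)`. -/
theorem IQ_eq_inter
    (K : Type*) [Field K] :
    IQ K = JQ K ⊓ Ideal.span {(X 0 : MvPolynomial (Fin 7) K), X 1, X 2, X 4} ⊓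
      Ideal.span {(X 2 : MvPolynomial (Fin 7) K), X 4, X 6} := by
  set R := MvPolynomial (Fin 7) K
  set P1 : Ideal R := Ideal.span {X 0, X 1, X 2, X 4} with hP1
  set P2 : Ideal R := Ideal.span {X 2, X 4, X 6} with hP2
  -- generators
  have g1 : (X 1 * X 2 - X 0 * X 4 : R) ∈ IQ K := Ideal.subset_span (by simp)
  have g2 : (X 2 * X 3 - X 0 * X 6 : R) ∈ IQ K := Ideal.subset_span (by simp)
  have g3 : (X 2 * X 5 - X 0 * X 6 : R) ∈ IQ K := Ideal.subset_span (by simp)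
  have g4 : (X 3 * X 4 - X 1 * X 6 : R) ∈ IQ K := Ideal.subset_span (by simp)
  have g5 : (X 4 * X 5 - X 1 * X 6 : R) ∈ IQ K := Ideal.subset_span (by simp)
  have j1 : (X 0 * X 4 - X 1 * X 2 : R) ∈ JQ K := Ideal.subset_span (by simp)
  have j2 : (X 0 * X 6 - X 2 * X 5 : R) ∈ JQ K := Ideal.subset_span (by simp)
  have j3 : (X 1 * X 6 - X 4 * X 5 : R) ∈ JQ K := Ideal.subset_span (by simp)
  have j4 : (X 3 - X 5 : R) ∈ JQ K := Ideal.subset_span (by simp)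
  have p10 : (X 0 : R) ∈ P1 := Ideal.subset_span (by simp)
  have p11 : (X 1 : R) ∈ P1 := Ideal.subset_span (by simp)
  have p12 : (X 2 : R) ∈ P1 := Ideal.subset_span (by simp)
  have p14 : (X 4 : R) ∈ P1 := Ideal.subset_span (by simp)
  have p22 : (X 2 : R) ∈ P2 := Ideal.subset_span (by simp)
  have p24 : (X 4 : R) ∈ P2 := Ideal.subset_span (by simp)
  have p26 : (X 6 : R) ∈ P2 := Ideal.subset_span (by simp)
  -- I ≤ everything
  have hIJ : IQ K ≤ JQ K := by
    rw [IQ, Ideal.span_le]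
    rintro x hx
    simp only [Set.mem_insert_iff, Set.mem_singleton_iff] at hx
    rcases hx with rfl | rfl | rfl | rfl | rfl
    · have h : (X 1 * X 2 - X 0 * X 4 : R) = -(X 0 * X 4 - X 1 * X 2) := by ring
      rw [h]; exact neg_mem j1
    · have h : (X 2 * X 3 - X 0 * X 6 : R) = X 2 * (X 3 - X 5) - (X 0 * X 6 - X 2 * X 5) := by ring
      rw [h]; exact sub_mem (Ideal.mul_mem_left _ _ j4) j2
    · have h : (X 2 * X 5 - X 0 * X 6 : R) = -(X 0 * X 6 - X 2 * X 5) := by ring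
      rw [h]; exact neg_mem j2
    · have h : (X 3 * X 4 - X 1 * X 6 : R) = X 4 * (X 3 - X 5) - (X 1 * X 6 - X 4 * X 5) := by ring
      rw [h]; exact sub_mem (Ideal.mul_mem_left _ _ j4) j3
    · have h : (X 4 * X 5 - X 1 * X 6 : R) = -(X 1 * X 6 - X 4 * X 5) := by ring
      rw [h]; exact neg_mem j3
  have hIP1 : IQ K ≤ P1 := by
    rw [IQ, Ideal.span_le]
    rintro x hx
    simp only [Set.mem_insert_iff, Set.mem_singleton_iff] at hx
    rcases hx with rfl | rfl | rfl | rfl | rfl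
    · exact sub_mem (Ideal.mul_mem_right _ _ p11) (Ideal.mul_mem_right _ _ p10)
    · exact sub_mem (Ideal.mul_mem_right _ _ p12) (Ideal.mul_mem_right _ _ p10)
    · exact sub_mem (Ideal.mul_mem_right _ _ p12) (Ideal.mul_mem_right _ _ p10)
    · exact sub_mem (Ideal.mul_mem_left _ _ p14) (Ideal.mul_mem_right _ _ p11)
    · exact sub_mem (Ideal.mul_mem_right _ _ p14) (Ideal.mul_mem_right _ _ p11)
  have hIP2 : IQ K ≤ P2 := by
    rw [IQ, Ideal.span_le]
    rintro x hx
    simp only [Set.mem_insert_iff, Set.mem_singleton_iff] at hx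
    rcases hx with rfl | rfl | rfl | rfl | rfl
    · exact sub_mem (Ideal.mul_mem_left _ _ p22) (Ideal.mul_mem_left _ _ p24)
    · exact sub_mem (Ideal.mul_mem_right _ _ p22) (Ideal.mul_mem_left _ _ p26)
    · exact sub_mem (Ideal.mul_mem_right _ _ p22) (Ideal.mul_mem_left _ _ p26)
    · exact sub_mem (Ideal.mul_mem_left _ _ p24) (Ideal.mul_mem_left _ _ p26)
    · exact sub_mem (Ideal.mul_mem_right _ _ p24) (Ideal.mul_mem_left _ _ p26)
  refine le_antisymm (le_inf (le_inf hIJ hIP1) hIP2) ?_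
  -- hard direction
  rintro x ⟨⟨hxJ, hxP1⟩, hxP2⟩
  -- JQ ≤ IQ ⊔ (X 3 - X 5)
  have hJsup : JQ K ≤ IQ K ⊔ Ideal.span {(X 3 - X 5 : R)} := by
    rw [JQ, Ideal.span_le]
    rintro y hy
    simp only [Set.mem_insert_iff, Set.mem_singleton_iff] at hy
    rcases hy with rfl | rfl | rfl | rfl
    · exact Ideal.mem_sup_left (by
        have h : (X 0 * X 4 - X 1 * X 2 : R) = -(X 1 * X 2 - X 0 * X 4) := by ring
        rw [h]; exact neg_mem g1)
    · exact Ideal.mem_sup_left (by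
        have h : (X 0 * X 6 - X 2 * X 5 : R) = -(X 2 * X 5 - X 0 * X 6) := by ring
        rw [h]; exact neg_mem g3)
    · exact Ideal.mem_sup_left (by
        have h : (X 1 * X 6 - X 4 * X 5 : R) = -(X 4 * X 5 - X 1 * X 6) := by ring
        rw [h]; exact neg_mem g5)
    · exact Ideal.mem_sup_right (Ideal.subset_span rfl)
  obtain ⟨p, hp, w, hw, hpw⟩ := Submodule.mem_sup.mp (hJsup hxJ)
  obtain ⟨q, rfl⟩ := Ideal.mem_span_singleton'.mp hw
  -- q * (X 3 - X 5) ∈ P1 ⊓ P2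
  have hwP1 : q * (X 3 - X 5) ∈ P1 := by
    have : q * (X 3 - X 5) = x - p := by rw [← hpw]; ring
    rw [this]; exact sub_mem hxP1 (hIP1 hp)
  have hwP2 : q * (X 3 - X 5) ∈ P2 := by
    have : q * (X 3 - X 5) = x - p := by rw [← hpw]; ring
    rw [this]; exact sub_mem hxP2 (hIP2 hp)
  -- cancel (X 3 - X 5)
  have hne : (X 3 - X 5 : R) ≠ 0 := sub_ne_zero.mpr (fun h => by
    have := X_injective h
    exact absurd this (by decide))
  have hs1 : ({X 0, X 1, X 2, X 4} : Set R) = X '' ({0, 1, 2, 4} : Set (Fin 7)) := by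
    simp [Set.image_insert_eq]
  have hs2 : ({X 2, X 4, X 6} : Set R) = X '' ({2, 4, 6} : Set (Fin 7)) := by
    simp [Set.image_insert_eq]
  have hqP1 : q ∈ P1 := by
    rw [hP1, hs1, mem_span_X_iff]
    rw [hP1, hs1, mem_span_X_iff] at hwP1
    rw [map_mul, map_sub, aeval_X, aeval_X,
      if_neg (by simp : ¬ (3 : Fin 7) ∈ ({0, 1, 2, 4} : Set (Fin 7))),
      if_neg (by simp : ¬ (5 : Fin 7) ∈ ({0, 1, 2, 4} : Set (Fin 7)))] at hwP1
    rcases mul_eq_zero.mp hwP1 with h | h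
    · exact h
    · exact absurd (sub_eq_zero.mp h) (fun h' => absurd (X_injective h') (by decide))
  have hqP2 : q ∈ P2 := by
    rw [hP2, hs2, mem_span_X_iff]
    rw [hP2, hs2, mem_span_X_iff] at hwP2
    rw [map_mul, map_sub, aeval_X, aeval_X,
      if_neg (by simp : ¬ (3 : Fin 7) ∈ ({2, 4, 6} : Set (Fin 7))),
      if_neg (by simp : ¬ (5 : Fin 7) ∈ ({2, 4, 6} : Set (Fin 7)))] at hwP2
    rcases mul_eq_zero.mp hwP2 with h | h
    · exact h
    · exact absurd (sub_eq_zero.mp h) (fun h' => absurd (X_injective h') (by decide))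
  -- q ∈ (c, e, ag, bg)
  have hq : q ∈ Ideal.span ({X 2, X 4, X 0 * X 6, X 1 * X 6} : Set R) := by
    have e1 : (X 0 * X 6 : R) = monomial (Finsupp.single 0 1 + Finsupp.single 6 1) 1 := by
      rw [X, X, monomial_mul, one_mul]
    have e2 : (X 1 * X 6 : R) = monomial (Finsupp.single 1 1 + Finsupp.single 6 1) 1 := by
      rw [X, X, monomial_mul, one_mul]
    have himg : ({X 2, X 4, X 0 * X 6, X 1 * X 6} : Set R) =
        (fun s => monomial s (1 : K)) '' {Finsupp.single 2 1, Finsupp.single 4 1,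
          Finsupp.single 0 1 + Finsupp.single 6 1, Finsupp.single 1 1 + Finsupp.single 6 1} := by
      rw [e1, e2]
      simp only [Set.image_insert_eq, Set.image_singleton]
      rw [X, X]
    rw [himg, mem_ideal_span_monomial_image]
    intro m hm
    rw [hP1, hs1, mem_ideal_span_X_image] at hqP1
    rw [hP2, hs2, mem_ideal_span_X_image] at hqP2
    obtain ⟨i, hi, hmi⟩ := hqP1 m hm
    obtain ⟨j, hj, hmj⟩ := hqP2 m hm
    simp only [Set.mem_insert_iff, Set.mem_singleton_iff] at hi hj
    by_cases h2 : m 2 ≠ 0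
    · exact ⟨Finsupp.single 2 1, by simp, Finsupp.single_le_iff.mpr (by omega)⟩
    by_cases h4 : m 4 ≠ 0
    · exact ⟨Finsupp.single 4 1, by simp, Finsupp.single_le_iff.mpr (by omega)⟩
    push_neg at h2 h4
    have hm6 : m 6 ≠ 0 := by
      rcases hj with rfl | rfl | rfl
      · exact absurd h2 hmj
      · exact absurd h4 hmj
      · exact hmj
    have hi01 : i = 0 ∨ i = 1 := by
      rcases hi with rfl | rfl | rfl | rfl
      · exact Or.inl rfl
      · exact Or.inr rfl
      · exact absurd h2 hmi
      · exact absurd h4 hmi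
    rcases hi01 with rfl | rfl
    · exact ⟨Finsupp.single 0 1 + Finsupp.single 6 1, by simp,
        pair_le (by decide) hmi hm6⟩
    · exact ⟨Finsupp.single 1 1 + Finsupp.single 6 1, by simp,
        pair_le (by decide) hmi hm6⟩
  -- q * (X 3 - X 5) ∈ IQ
  have hwI : q * (X 3 - X 5) ∈ IQ K := by
    refine Submodule.span_induction (p := fun y _ => y * (X 3 - X 5) ∈ IQ K)
      ?_ ?_ ?_ ?_ hq
    · rintro y hy
      simp only [Set.mem_insert_iff, Set.mem_singleton_iff] at hy
      rcases hy with rfl | rfl | rfl | rfl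
      · have h : (X 2 * (X 3 - X 5) : R)
            = (X 2 * X 3 - X 0 * X 6) - (X 2 * X 5 - X 0 * X 6) := by ring
        rw [h]; exact sub_mem g2 g3
      · have h : (X 4 * (X 3 - X 5) : R)
            = (X 3 * X 4 - X 1 * X 6) - (X 4 * X 5 - X 1 * X 6) := by ring
        rw [h]; exact sub_mem g4 g5
      · have h : ((X 0 * X 6) * (X 3 - X 5) : R)
            = X 5 * (X 2 * X 3 - X 0 * X 6) - X 3 * (X 2 * X 5 - X 0 * X 6) := by ring
        rw [h]; exact sub_mem (Ideal.mul_mem_left _ _ g2) (Ideal.mul_mem_left _ _ g3)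
      · have h : ((X 1 * X 6) * (X 3 - X 5) : R)
            = X 5 * (X 3 * X 4 - X 1 * X 6) - X 3 * (X 4 * X 5 - X 1 * X 6) := by ring
        rw [h]; exact sub_mem (Ideal.mul_mem_left _ _ g4) (Ideal.mul_mem_left _ _ g5)
    · simp
    · intro y z _ _ hy hz
      have h : ((y + z) * (X 3 - X 5) : R) = y * (X 3 - X 5) + z * (X 3 - X 5) := by ring
      rw [h]; exact add_mem hy hz
    · intro r y _ hy
      have h : ((r • y) * (X 3 - X 5) : R) = r * (y * (X 3 - X 5)) := by
        rw [smul_eq_mul]; ring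
      rw [h]; exact Ideal.mul_mem_left _ _ hy
  rw [← hpw]
  exact add_mem hp hwI
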